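/- arXiv:1903.03037 — 2 statements merged into one kernel-verified Lean document; each statement's English description precedes it below -/
import Mathlib

section
/- If p is analytic on the open unit disk with p(0) = 1 and Re(p(z)) > 0 on the disk, with Taylor expansion p(z) = 1 + c₁z + c₂z² + ⋯, then for any complex number ν one has |c₂ − ν c₁²| ≤ 2 · max{1, |2ν − 1|}. -/
open Complex Metric Set intervalIntegral Real

lemma FS_zero (p : ℂ → ℂ) (hp : DifferentiableOn ℂ p (Metric.ball 0 1))
    {r : ℝ} (hr0 : 0 < r) (hr1 : r < 1) (n : ℕ) :
    ∫ θ in (0:ℝ)..(2*π), p (circleMap 0 r θ) * Complex.exp ((n+1) * θ * I) = 0 := by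
  have hsub : closedBall (0:ℂ) r ⊆ ball 0 1 := by
    intro z hz
    simp only [mem_closedBall, mem_ball] at *
    linarith
  have hcirc : (∮ z in C(0, r), z ^ n * p z) = 0 := by
    apply circleIntegral_eq_zero_of_differentiable_on_off_countable hr0.le countable_empty
    · exact ((continuousOn_id.pow _).mul (hp.continuousOn.mono hsub))
    · intro z hz
      have hz1 : z ∈ ball (0:ℂ) 1 := hsub (ball_subset_closedBall hz.1)
      exact (differentiableAt_id.pow _).mul
        (hp.differentiableAt (isOpen_ball.mem_nhds hz1))
  rw [circleIntegral] at hcirc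
  have key : ∀ θ : ℝ, deriv (circleMap 0 r) θ • (circleMap 0 r θ ^ n * p (circleMap 0 r θ)) =
      (I * r ^ (n+1)) * (p (circleMap 0 r θ) * Complex.exp ((n+1) * θ * I)) := by
    intro θ
    rw [deriv_circleMap, circleMap_zero, smul_eq_mul]
    rw [mul_pow, ← Complex.exp_nat_mul]
    push_cast
    ring_nf
    rw [Complex.exp_add]
    ring
  simp_rw [key] at hcirc
  rw [intervalIntegral.integral_const_mul] at hcirc
  have hne : (I * (r:ℂ) ^ (n+1)) ≠ 0 := by
    simp [Complex.ext_iff, pow_ne_zero, hr0.ne']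
  exact (mul_eq_zero.mp hcirc).resolve_left hne

lemma FS_coeff (p : ℂ → ℂ) (hp : DifferentiableOn ℂ p (Metric.ball 0 1))
    {r : ℝ} (hr0 : 0 < r) (hr1 : r < 1) (n : ℕ) :
    ∫ θ in (0:ℝ)..(2*π), p (circleMap 0 r θ) * Complex.exp (-(n * θ * I)) =
      2 * π * r ^ n * (iteratedDeriv n p 0 / n.factorial) := by
  lift r to NNReal using hr0.le with R hR
  have hsub : closedBall (0:ℂ) R ⊆ ball 0 1 := by
    intro z hz
    simp only [mem_closedBall, mem_ball] at *
    linarith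
  have hps : HasFPowerSeriesOnBall p (cauchyPowerSeries p 0 R) 0 R :=
    (hp.mono hsub).hasFPowerSeriesOnBall (by exact_mod_cast hr0)
  have hder : iteratedDeriv n p 0 = n.factorial • (cauchyPowerSeries p 0 R n fun _ => 1) := by
    have h1 := hps.factorial_smul (1:ℂ) n
    have h2 : iteratedFDeriv ℂ n p 0 (fun _ => (1:ℂ)) = iteratedDeriv n p 0 := by
      rw [iteratedFDeriv_apply_eq_iteratedDeriv_mul_prod]
      simp
    rw [← h1] at h2
    exact h2.symm
  have happ := cauchyPowerSeries_apply p 0 R n 1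
  rw [circleIntegral] at happ
  have key : ∀ θ : ℝ, deriv (circleMap 0 R) θ •
      ((1 / (circleMap 0 R θ - 0)) ^ n • (circleMap 0 R θ - 0)⁻¹ • p (circleMap 0 R θ)) =
      (I * ((R:ℂ) ^ n)⁻¹) * (p (circleMap 0 R θ) * Complex.exp (-(n * θ * I))) := by
    intro θ
    rw [deriv_circleMap, circleMap_zero, sub_zero, smul_eq_mul, smul_eq_mul, smul_eq_mul]
    have h1 : Complex.exp (θ*I) ≠ 0 := Complex.exp_ne_zero _
    have hr' : (R:ℂ) ≠ 0 := by exact_mod_cast hr0.ne'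
    have hexp : Complex.exp (θ*I) ^ n * Complex.exp (-(n * θ * I)) = 1 := by
      rw [← Complex.exp_nat_mul, ← Complex.exp_add]
      ring_nf
      exact Complex.exp_zero
    have hexp' : Complex.exp (-(n * θ * I)) = (Complex.exp (θ*I) ^ n)⁻¹ := by
      rw [← Complex.exp_nat_mul, ← Complex.exp_neg]; ring_nf
    rw [hexp']
    field_simp
    rw [div_pow, one_pow, mul_pow]
    field_simp
  simp_rw [key] at happ
  rw [intervalIntegral.integral_const_mul] at happ
  rw [hder, happ]
  have hπ : (π:ℂ) ≠ 0 := by exact_mod_cast Real.pi_ne_zero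
  have hr' : ((R:ℝ):ℂ) ≠ 0 := by exact_mod_cast hr0.ne'
  have hfac : ((n.factorial:ℕ) : ℂ) ≠ 0 := by exact_mod_cast n.factorial_ne_zero
  have hI : Complex.I ≠ 0 := Complex.I_ne_zero
  rw [nsmul_eq_mul, smul_eq_mul]
  field_simp
  ring_nf
  exact intervalIntegral.integral_congr fun x _ => by ring_nf

lemma FS_cont (p : ℂ → ℂ) (hp : DifferentiableOn ℂ p (Metric.ball 0 1))
    {r : ℝ} (hr0 : 0 < r) (hr1 : r < 1) :
    Continuous fun θ : ℝ => p (circleMap 0 r θ) := by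
  apply (hp.continuousOn).comp_continuous (continuous_circleMap 0 r)
  intro θ
  simp [mem_ball, abs_of_pos hr0, hr1]

lemma FS_conj_int (p : ℂ → ℂ) (hp : DifferentiableOn ℂ p (Metric.ball 0 1))
    {r : ℝ} (hr0 : 0 < r) (hr1 : r < 1) (f : ℝ → ℂ) (hf : Continuous f) :
    ∫ θ in (0:ℝ)..(2*π), (starRingEnd ℂ) (f θ) =
      (starRingEnd ℂ) (∫ θ in (0:ℝ)..(2*π), f θ) := by
  rw [intervalIntegral.integral_of_le (by positivity), intervalIntegral.integral_of_le (by positivity)]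
  exact _root_.integral_conj

lemma FS_Jcoeff (p : ℂ → ℂ) (hp : DifferentiableOn ℂ p (Metric.ball 0 1))
    {r : ℝ} (hr0 : 0 < r) (hr1 : r < 1) (n : ℕ) :
    ∫ θ in (0:ℝ)..(2*π), ((p (circleMap 0 r θ)).re : ℂ) * Complex.exp (-((n+1) * θ * I)) =
      π * r ^ (n+1) * (iteratedDeriv (n+1) p 0 / (n+1).factorial) := by
  have hcont := FS_cont p hp hr0 hr1
  have hA := FS_coeff p hp hr0 hr1 (n+1)
  push_cast at hA
  have hB := FS_zero p hp hr0 hr1 n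
  have hBc : ∫ θ in (0:ℝ)..(2*π),
      (starRingEnd ℂ) (p (circleMap 0 r θ)) * Complex.exp (-((n+1) * θ * I)) = 0 := by
    have hpt : ∀ θ : ℝ, (starRingEnd ℂ) (p (circleMap 0 r θ) * Complex.exp ((↑n+1) * θ * I)) =
        (starRingEnd ℂ) (p (circleMap 0 r θ)) * Complex.exp (-((↑n+1) * θ * I)) := by
      intro θ
      rw [map_mul, ← Complex.exp_conj]
      congr 2
      simp only [map_mul, map_add, Complex.conj_I, Complex.conj_ofReal, map_one, map_natCast]
      ring
    rw [← intervalIntegral.integral_congr (fun θ _ => (hpt θ))]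
    rw [FS_conj_int p hp hr0 hr1 _ (by continuity)]
    rw [hB, map_zero]
  have hsplit : ∀ θ : ℝ, ((p (circleMap 0 r θ)).re : ℂ) * Complex.exp (-((↑n+1) * θ * I)) =
      (p (circleMap 0 r θ) * Complex.exp (-((↑n+1) * θ * I))
        + (starRingEnd ℂ) (p (circleMap 0 r θ)) * Complex.exp (-((↑n+1) * θ * I))) / 2 := by
    intro θ
    rw [← add_mul, Complex.add_conj]
    push_cast
    ring
  rw [intervalIntegral.integral_congr (fun θ _ => hsplit θ)]
  simp_rw [div_eq_mul_inv, intervalIntegral.integral_mul_const]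
  rw [intervalIntegral.integral_add]
  · rw [hBc, hA]
    push_cast
    ring
  · exact ((hcont.mul (by continuity)).intervalIntegrable _ _)
  · exact (((Complex.continuous_conj.comp hcont).mul (by continuity)).intervalIntegrable _ _)

lemma FS_J0 (p : ℂ → ℂ) (hp : DifferentiableOn ℂ p (Metric.ball 0 1)) (hp0 : p 0 = 1)
    {r : ℝ} (hr0 : 0 < r) (hr1 : r < 1) :
    ∫ θ in (0:ℝ)..(2*π), ((p (circleMap 0 r θ)).re : ℂ) = 2*π := by
  have hcont := FS_cont p hp hr0 hr1
  have hA := FS_coeff p hp hr0 hr1 0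
  simp only [pow_zero, Nat.cast_zero, Nat.factorial_zero, Nat.cast_one, iteratedDeriv_zero,
    hp0, zero_mul, neg_zero, Complex.exp_zero, mul_one] at hA
  have hAc : ∫ θ in (0:ℝ)..(2*π), (starRingEnd ℂ) (p (circleMap 0 r θ)) = 2*π := by
    rw [FS_conj_int p hp hr0 hr1 _ hcont, hA]
    simp [Complex.ext_iff]
  have hsplit : ∀ θ : ℝ, ((p (circleMap 0 r θ)).re : ℂ) =
      (p (circleMap 0 r θ) + (starRingEnd ℂ) (p (circleMap 0 r θ))) / 2 := by
    intro θ
    rw [Complex.add_conj]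
    push_cast
    ring
  rw [intervalIntegral.integral_congr (fun θ _ => hsplit θ)]
  simp_rw [div_eq_mul_inv, intervalIntegral.integral_mul_const]
  have hint2 : IntervalIntegrable (fun θ : ℝ => (starRingEnd ℂ) (p (circleMap 0 r θ)))
      MeasureTheory.volume 0 (2*π) :=
    (by exact Complex.continuous_conj.comp hcont :
      Continuous fun θ : ℝ => (starRingEnd ℂ) (p (circleMap 0 r θ))).intervalIntegrable _ _
  rw [intervalIntegral.integral_add (hcont.intervalIntegrable _ _) hint2, hA, hAc]
  ring

lemma FS_r (p : ℂ → ℂ) (hp : DifferentiableOn ℂ p (Metric.ball 0 1)) (hp0 : p 0 = 1)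
    (hre : ∀ z ∈ Metric.ball (0 : ℂ) 1, 0 < (p z).re)
    {r : ℝ} (hr0 : 0 < r) (hr1 : r < 1) :
    ‖iteratedDeriv 1 p 0‖ * r ≤ 2 ∧
    ‖iteratedDeriv 2 p 0 / 2 - (iteratedDeriv 1 p 0)^2 / 2‖ * r^2 ≤
      2 - ‖iteratedDeriv 1 p 0‖^2 * r^2 / 2 := by
  set c1 : ℂ := iteratedDeriv 1 p 0 with hc1
  set c2 : ℂ := iteratedDeriv 2 p 0 / 2 with hc2
  have hcont := FS_cont p hp hr0 hr1
  have hucont : Continuous fun θ : ℝ => ((p (circleMap 0 r θ)).re : ℂ) :=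
    Complex.continuous_ofReal.comp (Complex.continuous_re.comp hcont)
  have hunn : ∀ θ : ℝ, 0 ≤ (p (circleMap 0 r θ)).re := by
    intro θ
    refine (hre _ ?_).le
    simp [mem_ball, abs_of_pos hr0, hr1]
  -- J-integrals
  have hJ1 : ∫ θ in (0:ℝ)..(2*π), ((p (circleMap 0 r θ)).re : ℂ) * Complex.exp (-(θ * I)) =
      π * r * c1 := by
    have := FS_Jcoeff p hp hr0 hr1 0
    norm_num at this
    rw [this, hc1, iteratedDeriv_one]
  have hJ2 : ∫ θ in (0:ℝ)..(2*π), ((p (circleMap 0 r θ)).re : ℂ) * Complex.exp (-(2 * θ * I)) =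
      π * r^2 * c2 := by
    have := FS_Jcoeff p hp hr0 hr1 1
    norm_num at this
    rw [this, hc2]
  have hJ0 := FS_J0 p hp hp0 hr0 hr1
  have h2π : (0:ℝ) < 2*π := by positivity
  have hu2π : ∫ θ in (0:ℝ)..(2*π), (p (circleMap 0 r θ)).re = 2*π := by
    rw [intervalIntegral.integral_ofReal] at hJ0
    exact_mod_cast hJ0
  have hnorme : ∀ θ : ℝ, ‖Complex.exp (-(θ * I))‖ = 1 := by
    intro θ
    rw [show -((θ:ℂ) * I) = ((-θ : ℝ) : ℂ) * I by push_cast; ring]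
    exact Complex.norm_exp_ofReal_mul_I _
  have hce1 : Continuous fun θ : ℝ => Complex.exp (-((θ:ℂ) * I)) :=
    Complex.continuous_exp.comp (Complex.continuous_ofReal.mul continuous_const).neg
  have hce2 : Continuous fun θ : ℝ => Complex.exp (-(2 * (θ:ℂ) * I)) :=
    Complex.continuous_exp.comp ((continuous_const.mul Complex.continuous_ofReal).mul
      continuous_const).neg
  -- Part 1
  have part1 : ‖c1‖ * r ≤ 2 := by
    have hb : ‖∫ θ in (0:ℝ)..(2*π), ((p (circleMap 0 r θ)).re : ℂ) * Complex.exp (-(θ * I))‖ ≤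
        ∫ θ in (0:ℝ)..(2*π), (p (circleMap 0 r θ)).re := by
      refine (intervalIntegral.norm_integral_le_integral_norm h2π.le).trans_eq ?_
      refine intervalIntegral.integral_congr fun θ _ => ?_
      rw [norm_mul, hnorme θ, mul_one, Complex.norm_real, Real.norm_eq_abs,
        _root_.abs_of_nonneg (hunn θ)]
    rw [hJ1, hu2π] at hb
    have : ‖(π : ℂ) * r * c1‖ = π * r * ‖c1‖ := by
      simp [norm_mul, abs_of_pos Real.pi_pos, abs_of_pos hr0]
    rw [this] at hb
    nlinarith [Real.pi_pos, norm_nonneg c1]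
  refine ⟨part1, ?_⟩
  -- Part 2 : variance argument
  set m : ℂ := (r : ℂ) * c1 / 2 with hm
  have hE : ∫ θ in (0:ℝ)..(2*π),
      ((p (circleMap 0 r θ)).re : ℂ) * (Complex.exp (-(θ * I)) - m)^2 =
      (π : ℂ) * r^2 * (c2 - c1^2/2) := by
    have hpt : ∀ θ : ℝ, ((p (circleMap 0 r θ)).re : ℂ) * (Complex.exp (-(θ * I)) - m)^2 =
        (((p (circleMap 0 r θ)).re : ℂ) * Complex.exp (-(2 * θ * I))
          - (2*m) * (((p (circleMap 0 r θ)).re : ℂ) * Complex.exp (-(θ * I)))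
          + m^2 * ((p (circleMap 0 r θ)).re : ℂ)) := by
      intro θ
      have he : Complex.exp (-((θ:ℂ) * I))^2 = Complex.exp (-(2 * θ * I)) := by
        rw [sq, ← Complex.exp_add]
        ring_nf
      rw [← he]
      ring
    rw [intervalIntegral.integral_congr fun θ _ => hpt θ]
    rw [intervalIntegral.integral_add, intervalIntegral.integral_sub,
      intervalIntegral.integral_const_mul, intervalIntegral.integral_const_mul,
      hJ1, hJ2, hJ0]
    · rw [hm]; push_cast; ring
    · exact (hucont.mul hce2).intervalIntegrable _ _
    · exact (continuous_const.mul (hucont.mul hce1)).intervalIntegrable _ _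
    · exact ((hucont.mul hce2).sub
        (continuous_const.mul (hucont.mul hce1))).intervalIntegrable _ _
    · exact (continuous_const.mul hucont).intervalIntegrable _ _
  -- conjugate J1
  have hJ1c : ∫ θ in (0:ℝ)..(2*π), ((p (circleMap 0 r θ)).re : ℂ) * Complex.exp ((θ:ℂ) * I) =
      (starRingEnd ℂ) ((π:ℂ) * r * c1) := by
    rw [← hJ1, ← FS_conj_int p hp hr0 hr1 (fun θ => ((p (circleMap 0 r θ)).re : ℂ) * Complex.exp (-(θ * I))) (hucont.mul hce1)]
    refine intervalIntegral.integral_congr fun θ _ => ?_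
    rw [map_mul, ← Complex.exp_conj]
    simp only [Complex.conj_ofReal, map_neg, map_mul, Complex.conj_I]
    ring_nf
  -- the weighted quadratic integral
  have hC : ∫ θ in (0:ℝ)..(2*π),
      (p (circleMap 0 r θ)).re * ‖Complex.exp (-((θ:ℂ) * I)) - m‖^2 =
      2*π - π * r^2 * ‖c1‖^2 / 2 := by
    have hCc : ∫ θ in (0:ℝ)..(2*π),
        (((p (circleMap 0 r θ)).re * ‖Complex.exp (-((θ:ℂ) * I)) - m‖^2 : ℝ) : ℂ) =
        ((2*π - π * r^2 * ‖c1‖^2 / 2 : ℝ) : ℂ) := by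
      have hpt : ∀ θ : ℝ, (((p (circleMap 0 r θ)).re * ‖Complex.exp (-((θ:ℂ) * I)) - m‖^2 : ℝ) : ℂ)
          = ((p (circleMap 0 r θ)).re : ℂ)
            - (starRingEnd ℂ) m * (((p (circleMap 0 r θ)).re : ℂ) * Complex.exp (-((θ:ℂ) * I)))
            - m * (((p (circleMap 0 r θ)).re : ℂ) * Complex.exp ((θ:ℂ) * I))
            + (m * (starRingEnd ℂ) m) * ((p (circleMap 0 r θ)).re : ℂ) := by
        intro θ
        have hw : ((‖Complex.exp (-((θ:ℂ) * I)) - m‖^2 : ℝ) : ℂ) =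
            (Complex.exp (-((θ:ℂ) * I)) - m) *
              (starRingEnd ℂ) (Complex.exp (-((θ:ℂ) * I)) - m) := by
          rw [Complex.mul_conj, Complex.normSq_eq_norm_sq]
        have hee : Complex.exp (-((θ:ℂ) * I)) * (starRingEnd ℂ) (Complex.exp (-((θ:ℂ) * I))) = 1 := by
          rw [← Complex.exp_conj, ← Complex.exp_add]
          simp only [map_neg, map_mul, Complex.conj_ofReal, Complex.conj_I]
          ring_nf
          exact Complex.exp_zero
        have hconj_e : (starRingEnd ℂ) (Complex.exp (-((θ:ℂ) * I))) = Complex.exp ((θ:ℂ) * I) := by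
          rw [← Complex.exp_conj]
          simp only [map_neg, map_mul, Complex.conj_ofReal, Complex.conj_I]
          ring_nf
        rw [Complex.ofReal_mul, hw, map_sub, hconj_e]
        have : Complex.exp (-((θ:ℂ) * I)) * Complex.exp ((θ:ℂ) * I) = 1 := by
          rw [hconj_e] at hee; exact hee
        linear_combination ((p (circleMap 0 r θ)).re : ℂ) * this
      rw [intervalIntegral.integral_congr fun θ _ => hpt θ]
      rw [intervalIntegral.integral_add, intervalIntegral.integral_sub,
        intervalIntegral.integral_sub, intervalIntegral.integral_const_mul,
        intervalIntegral.integral_const_mul, intervalIntegral.integral_const_mul,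
        hJ0, hJ1, hJ1c]
      · have habs : c1 * (starRingEnd ℂ) c1 = ((‖c1‖^2 : ℝ) : ℂ) := by
          rw [Complex.mul_conj, Complex.normSq_eq_norm_sq]
        rw [hm]
        push_cast
        simp only [map_mul, map_div₀, Complex.conj_ofReal, map_ofNat]
        push_cast at habs
        linear_combination (-(π:ℂ) * r^2/2) * habs
      · exact hucont.intervalIntegrable _ _
      · exact (continuous_const.mul (hucont.mul hce1)).intervalIntegrable _ _
      · exact (hucont.sub (continuous_const.mul (hucont.mul hce1))).intervalIntegrable _ _
      · exact (continuous_const.mul (hucont.mul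
          (Complex.continuous_exp.comp (Complex.continuous_ofReal.mul
            continuous_const)))).intervalIntegrable _ _
      · exact ((hucont.sub (continuous_const.mul (hucont.mul hce1))).sub
          (continuous_const.mul (hucont.mul
            (Complex.continuous_exp.comp (Complex.continuous_ofReal.mul
              continuous_const))))).intervalIntegrable _ _
      · exact (continuous_const.mul hucont).intervalIntegrable _ _
    rw [intervalIntegral.integral_ofReal] at hCc
    exact_mod_cast hCc
  -- combine
  have hb2 : ‖(π:ℂ) * r^2 * (c2 - c1^2/2)‖ ≤ 2*π - π * r^2 * ‖c1‖^2 / 2 := by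
    rw [← hE, ← hC]
    refine (intervalIntegral.norm_integral_le_integral_norm h2π.le).trans_eq ?_
    refine intervalIntegral.integral_congr fun θ _ => ?_
    rw [norm_mul, norm_pow, Complex.norm_real, Real.norm_eq_abs, _root_.abs_of_nonneg (hunn θ)]
  have hnn : ‖(π:ℂ) * r^2 * (c2 - c1^2/2)‖ = π * r^2 * ‖c2 - c1^2/2‖ := by
    rw [norm_mul, norm_mul]
    simp [abs_of_pos Real.pi_pos, abs_of_pos hr0]
  rw [hnn] at hb2
  have hfinal : ‖c2 - c1^2/2‖ * r^2 ≤ 2 - ‖c1‖^2 * r^2 / 2 := by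
    nlinarith [Real.pi_pos, norm_nonneg (c2 - c1^2/2), sq_nonneg r]
  rw [hc2, hc1] at hfinal
  exact hfinal

-- limit r → 1
lemma FS_limit (p : ℂ → ℂ) (hp : DifferentiableOn ℂ p (Metric.ball 0 1)) (hp0 : p 0 = 1)
    (hre : ∀ z ∈ Metric.ball (0 : ℂ) 1, 0 < (p z).re) :
    ‖iteratedDeriv 1 p 0‖ ≤ 2 ∧
    ‖iteratedDeriv 2 p 0 / 2 - (iteratedDeriv 1 p 0)^2 / 2‖ ≤
      2 - ‖iteratedDeriv 1 p 0‖^2 / 2 := by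
  set a : ℝ := ‖iteratedDeriv 1 p 0‖ with ha
  set b : ℝ := ‖iteratedDeriv 2 p 0 / 2 - (iteratedDeriv 1 p 0)^2 / 2‖ with hb
  have key : ∀ r : ℝ, 0 < r → r < 1 → a * r ≤ 2 ∧ b * r^2 ≤ 2 - a^2 * r^2 / 2 :=
    fun r h0 h1 => FS_r p hp hp0 hre h0 h1
  have hlt : Filter.NeBot (nhdsWithin (1:ℝ) (Set.Iio 1)) := inferInstance
  constructor
  · have h1 : Filter.Tendsto (fun r : ℝ => a * r) (nhdsWithin 1 (Set.Iio 1)) (nhds a) := by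
      have hco : Continuous fun r : ℝ => a * r := by continuity
      have h2 := hco.tendsto (1:ℝ)
      rw [mul_one] at h2
      exact h2.mono_left nhdsWithin_le_nhds
    refine le_of_tendsto h1 ?_
    filter_upwards [Ioo_mem_nhdsLT_of_mem (by constructor <;> norm_num : (1:ℝ) ∈ Set.Ioc 0 1)]
      with r hr
    exact (key r hr.1 hr.2).1
  · have h1 : Filter.Tendsto (fun r : ℝ => b * r^2 - (2 - a^2 * r^2/2))
        (nhdsWithin 1 (Set.Iio 1)) (nhds (b - (2 - a^2/2))) := by
      have : Continuous fun r : ℝ => b * r^2 - (2 - a^2 * r^2/2) := by continuity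
      have h2 := this.tendsto (1:ℝ)
      norm_num at h2
      exact (h2.mono_left nhdsWithin_le_nhds)
    have h3 : b - (2 - a^2/2) ≤ 0 := by
      refine le_of_tendsto h1 ?_
      filter_upwards [Ioo_mem_nhdsLT_of_mem (by constructor <;> norm_num : (1:ℝ) ∈ Set.Ioc 0 1)]
        with r hr
      linarith [(key r hr.1 hr.2).2]
    linarith

/-- For `p` in the Carathéodory class with Taylor coefficients `cₙ`, for any
complex `ν` one has `‖c₂ − ν c₁²‖ ≤ 2 max {1, ‖2ν − 1‖}`. -/
theorem caratheodory_fekete_szego (p : ℂ → ℂ) (c : ℕ → ℂ)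
    (hp : DifferentiableOn ℂ p (Metric.ball 0 1))
    (hp0 : p 0 = 1)
    (hre : ∀ z ∈ Metric.ball (0 : ℂ) 1, 0 < (p z).re)
    (hc : ∀ n, c n = iteratedDeriv n p 0 / n.factorial)
    (ν : ℂ) :
    ‖c 2 - ν * c 1 ^ 2‖ ≤ 2 * max 1 ‖2 * ν - 1‖ := by
  obtain ⟨h1, h2⟩ := FS_limit p hp hp0 hre
  have hc1 : c 1 = iteratedDeriv 1 p 0 := by rw [hc]; norm_num
  have hc2 : c 2 = iteratedDeriv 2 p 0 / 2 := by rw [hc]; norm_num [Nat.factorial]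
  rw [← hc1] at h1 h2
  rw [← hc2] at h2
  have hdecomp : c 2 - ν * c 1 ^ 2 = (c 2 - c 1 ^ 2 / 2) + (1/2 - ν) * c 1 ^ 2 := by ring
  have hnorm2 : ‖(1/2 - ν) * c 1 ^ 2‖ = ‖2 * ν - 1‖ / 2 * ‖c 1‖^2 := by
    rw [norm_mul, norm_pow]
    congr 1
    rw [show (2 * ν - 1 : ℂ) = (-2) * (1/2 - ν) by ring, norm_mul]
    simp
  have htri : ‖c 2 - ν * c 1 ^ 2‖ ≤ ‖c 2 - c 1 ^ 2 / 2‖ + ‖2 * ν - 1‖ / 2 * ‖c 1‖^2 := by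
    rw [hdecomp, ← hnorm2]
    exact norm_add_le _ _
  set s := ‖2 * ν - 1‖ with hs
  set t := ‖c 1‖ with ht
  have hs0 : 0 ≤ s := norm_nonneg _
  have ht0 : 0 ≤ t := norm_nonneg _
  rcases le_total s 1 with hcase | hcase
  · rw [max_eq_left hcase]
    nlinarith [sq_nonneg t]
  · rw [max_eq_right hcase]
    have ht4 : t^2 ≤ 4 := by nlinarith
    nlinarith [mul_nonneg (sub_nonneg.2 hcase) (sub_nonneg.2 ht4)]
end

section
/- Let 0 ≤ β < 1 and let f(z) = z + a₂z² + a₃z³ + ⋯ be starlike of order β on the unit disk. Then for any real number μ, |a₃ − μ a₂²| ≤ (1 − β) · max{1, |3 − 2β − 4μ(1 − β)|}. -/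
open Metric Set Filter Complex
open scoped Topology

private lemma analyticOnNhd_dslope_zero {f : ℂ → ℂ} {s : Set ℂ}
    (h0 : s ∈ 𝓝 (0:ℂ)) (hf : AnalyticOnNhd ℂ f s) : AnalyticOnNhd ℂ (dslope f 0) s := by
  intro z hz
  rcases eq_or_ne z 0 with rfl | hz0
  · obtain ⟨p, hp⟩ := hf 0 (mem_of_mem_nhds h0)
    exact ⟨_, hp.has_fpower_series_dslope_fslope⟩
  · have h1 : AnalyticAt ℂ (fun w => (f w - f 0) / (w - 0)) z := by
      exact ((hf z hz).sub analyticAt_const).div (analyticAt_id.sub analyticAt_const)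
        (by simpa using hz0)
    refine h1.congr ?_
    filter_upwards [eventually_ne_nhds hz0] with w hw
    rw [dslope_of_ne f hw, slope_def_field]

private lemma schwarz_pick_zero {φ : ℂ → ℂ} (hd : DifferentiableOn ℂ φ (ball 0 1))
    (hb : ∀ z ∈ ball (0:ℂ) 1, ‖φ z‖ ≤ 1) :
    ‖deriv φ 0‖ ≤ 1 - ‖φ 0‖ ^ 2 := by
  have h01 : (0:ℂ) ∈ ball (0:ℂ) 1 := by simp
  set w := φ 0 with hw
  have hw1 : ‖w‖ ≤ 1 := hb 0 h01
  rcases eq_or_lt_of_le hw1 with heq | hlt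
  · have hmax : IsMaxOn (norm ∘ φ) (ball (0:ℂ) 1) 0 := by
      intro z hz
      simpa [← heq] using hb z hz
    have hconst : EqOn φ (Function.const ℂ (φ 0)) (ball (0:ℂ) 1) :=
      Complex.eqOn_of_isPreconnected_of_isMaxOn_norm (convex_ball (0:ℂ) 1).isPreconnected
        isOpen_ball hd h01 hmax
    have hder : deriv φ 0 = 0 := by
      have h2 : φ =ᶠ[𝓝 0] Function.const ℂ (φ 0) :=
        eventuallyEq_iff_exists_mem.2 ⟨ball 0 1, isOpen_ball.mem_nhds h01, hconst⟩
      rw [h2.deriv_eq]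
      exact deriv_const 0 (φ 0)
    rw [hder, norm_zero, heq]
    norm_num
  · have hwsq : Complex.normSq w < 1 := by
      have hlt' : ‖w‖ < 1 := by exact hlt
      rw [← Complex.sq_norm]
      nlinarith [norm_nonneg w, hlt']
    set h : ℂ → ℂ := fun z => (φ z - w) / (1 - (starRingEnd ℂ) w * φ z) with hh
    have key : ∀ u : ℂ, ‖u‖ ≤ 1 → ‖u - w‖ ≤ ‖1 - (starRingEnd ℂ) w * u‖ := by
      intro u hu
      have hu' : u.re ^ 2 + u.im ^ 2 ≤ 1 := by
        have h1 : Complex.normSq u ≤ 1 := by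
          have hu2 : ‖u‖ ≤ 1 := by exact hu
          rw [← Complex.sq_norm]; nlinarith [norm_nonneg u, hu2]
        simpa [Complex.normSq_apply, sq] using h1
      have hw' : w.re ^ 2 + w.im ^ 2 ≤ 1 := by
        have h1 : Complex.normSq w ≤ 1 := hwsq.le
        simpa [Complex.normSq_apply, sq] using h1
      rw [Complex.norm_def, Complex.norm_def]
      apply Real.sqrt_le_sqrt
      simp only [Complex.normSq_apply, Complex.sub_re, Complex.sub_im, Complex.mul_re,
        Complex.mul_im, Complex.one_re, Complex.one_im, Complex.conj_re, Complex.conj_im]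
      nlinarith [mul_nonneg (sub_nonneg.2 hu') (sub_nonneg.2 hw')]
    have hden : ∀ z ∈ ball (0:ℂ) 1, (1 - (starRingEnd ℂ) w * φ z) ≠ 0 := by
      intro z hz
      have h1 : ‖(starRingEnd ℂ) w * φ z‖ < 1 := by
        rw [norm_mul]
        calc ‖(starRingEnd ℂ) w‖ * ‖φ z‖ ≤ ‖w‖ * 1 := by
              rw [RCLike.norm_conj]
              exact mul_le_mul_of_nonneg_left (hb z hz) (norm_nonneg _)
          _ < 1 := by simpa using hlt
      intro hc
      rw [sub_eq_zero] at hc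
      rw [← hc] at h1
      simp at h1
    have hhd : DifferentiableOn ℂ h (ball 0 1) := by
      apply DifferentiableOn.div
      · exact hd.sub (differentiableOn_const _)
      · exact (differentiableOn_const _).sub ((differentiableOn_const _).mul hd)
      · exact hden
    have hhb : ∀ z ∈ ball (0:ℂ) 1, ‖h z‖ ≤ 1 := by
      intro z hz
      rw [hh]
      simp only
      rw [norm_div, div_le_one (norm_pos_iff.2 (hden z hz))]
      exact key (φ z) (hb z hz)
    have h0 : h 0 = 0 := by simp [hh, ← hw]
    have hd1 : ∀ R : ℝ, 1 < R → ‖deriv h 0‖ ≤ R := by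
      intro R hR
      have maps : MapsTo h (ball (0:ℂ) 1) (ball (h 0) R) := by
        intro z hz
        rw [h0, mem_ball, dist_eq_norm, sub_zero]
        exact lt_of_le_of_lt (hhb z hz) hR
      simpa using Complex.norm_deriv_le_div_of_mapsTo_ball hhd (maps.mono_right ball_subset_closedBall) one_pos
    have hd2 : ‖deriv h 0‖ ≤ 1 := by
      by_contra h'
      push_neg at h'
      have := hd1 ((1 + ‖deriv h 0‖) / 2) (by linarith)
      linarith
    have hφd : DifferentiableAt ℂ φ 0 := hd.differentiableAt (isOpen_ball.mem_nhds h01)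
    have hden0 : (1 : ℂ) - (starRingEnd ℂ) w * w ≠ 0 := by
      rw [← Complex.normSq_eq_conj_mul_self]
      intro hc
      rw [sub_eq_zero] at hc
      have : ((Complex.normSq w : ℂ)).re = (1:ℂ).re := by rw [← hc]
      simp at this
      rw [this] at hwsq
      exact absurd hwsq (lt_irrefl _)
    have hdh : deriv h 0 = deriv φ 0 / (1 - (starRingEnd ℂ) w * w) := by
      rw [hh]
      rw [deriv_fun_div (hφd.sub_const w) ((hφd.const_mul _).const_sub 1) (by rw [← hw]; exact hden0)]
      rw [deriv_const_sub, deriv_const_mul _ hφd, deriv_sub_const, ← hw]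
      rw [sub_self, zero_mul, sub_zero]
      rw [sq]
      field_simp
    have hnorm : ‖deriv φ 0‖ / (1 - Complex.normSq w) ≤ 1 := by
      have : ‖(1 : ℂ) - (starRingEnd ℂ) w * w‖ = 1 - Complex.normSq w := by
        rw [← Complex.normSq_eq_conj_mul_self]
        rw [show (1 : ℂ) - (Complex.normSq w : ℂ) = ((1 - Complex.normSq w : ℝ) : ℂ) by
          push_cast; ring]
        rw [Complex.norm_real, Real.norm_eq_abs, abs_of_pos (by linarith)]
      calc ‖deriv φ 0‖ / (1 - Complex.normSq w) = ‖deriv h 0‖ := by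
            rw [hdh, norm_div, this]
        _ ≤ 1 := hd2
    have hpos : 0 < 1 - Complex.normSq w := by linarith
    rw [div_le_one hpos] at hnorm
    calc ‖deriv φ 0‖ ≤ 1 - Complex.normSq w := by linarith
      _ = 1 - ‖w‖ ^ 2 := by rw [Complex.normSq_eq_norm_sq]

private lemma key2 (β : ℝ) (hβ1 : β < 1) (p : ℂ) (hp : β < p.re) :
    ‖p - 1‖ < ‖p + (1 - 2*β)‖ := by
  rw [Complex.norm_def, Complex.norm_def]
  apply Real.sqrt_lt_sqrt (Complex.normSq_nonneg _)
  simp only [Complex.normSq_apply, Complex.sub_re, Complex.sub_im, Complex.add_re,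
    Complex.add_im, Complex.one_re, Complex.one_im, Complex.ofReal_re, Complex.ofReal_im,
    Complex.mul_re, Complex.mul_im]
  simp
  nlinarith [hp, hβ1]

private lemma coeffs_of_id_mul {F G : ℂ → ℂ} (hFG : ∀ z, F z = z * G z)
    (hGa : AnalyticOnNhd ℂ G (ball 0 1)) :
    deriv F 0 = G 0 ∧ deriv (deriv F) 0 = 2 * deriv G 0 ∧
      deriv (deriv (deriv F)) 0 = 3 * deriv (deriv G) 0 := by
  have h01 : (0:ℂ) ∈ ball (0:ℂ) 1 := by simp
  have hG1a : AnalyticOnNhd ℂ (deriv G) (ball 0 1) := hGa.deriv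
  have hG2a : AnalyticOnNhd ℂ (deriv (deriv G)) (ball 0 1) := hG1a.deriv
  have hFfun : F = fun w => w * G w := funext hFG
  have hE1 : ∀ z ∈ ball (0:ℂ) 1, deriv F z = G z + z * deriv G z := by
    intro z hz
    rw [hFfun, deriv_fun_mul differentiableAt_fun_id ((hGa z hz).differentiableAt)]
    simp
  have hE2 : ∀ z ∈ ball (0:ℂ) 1, deriv (deriv F) z = 2 * deriv G z + z * deriv (deriv G) z := by
    intro z hz
    have h1 : deriv F =ᶠ[𝓝 z] fun w => G w + w * deriv G w :=
      eventually_of_mem (isOpen_ball.mem_nhds hz) hE1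
    rw [h1.deriv_eq,
      deriv_fun_add ((hGa z hz).differentiableAt)
        (differentiableAt_fun_id.fun_mul ((hG1a z hz).differentiableAt)),
      deriv_fun_mul differentiableAt_fun_id ((hG1a z hz).differentiableAt)]
    simp
    ring
  have hE3 : deriv (deriv (deriv F)) 0 = 3 * deriv (deriv G) 0 := by
    have h1 : deriv (deriv F) =ᶠ[𝓝 0] fun w => 2 * deriv G w + w * deriv (deriv G) w :=
      eventually_of_mem (isOpen_ball.mem_nhds h01) hE2
    rw [h1.deriv_eq,
      deriv_fun_add ((hG1a 0 h01).differentiableAt.const_mul 2)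
        (differentiableAt_fun_id.fun_mul ((hG2a 0 h01).differentiableAt)),
      deriv_const_mul 2 ((hG1a 0 h01).differentiableAt),
      deriv_fun_mul differentiableAt_fun_id ((hG2a 0 h01).differentiableAt)]
    simp
    ring
  refine ⟨?_, ?_, hE3⟩
  · rw [hE1 0 h01]; simp
  · rw [hE2 0 h01]; simp

/-- Fekete–Szegő inequality for starlike functions of order `β`:
`|a₃ − μ a₂²| ≤ (1−β) max {1, |3 − 2β − 4μ(1−β)|}` for real `μ`. -/
theorem starlike_fekete_szego (β : ℝ) (hβ : 0 ≤ β) (hβ1 : β < 1)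
    (f : ℂ → ℂ) (a : ℕ → ℂ)
    (hf : DifferentiableOn ℂ f (Metric.ball 0 1))
    (hf0 : f 0 = 0) (hf1 : deriv f 0 = 1)
    (hstar : ∀ z ∈ Metric.ball (0 : ℂ) 1, z ≠ 0 → β < (z * deriv f z / f z).re)
    (ha : ∀ n, a n = iteratedDeriv n f 0 / n.factorial)
    (μ : ℝ) :
    ‖a 3 - (μ : ℂ) * a 2 ^ 2‖ ≤
      (1 - β) * max 1 |3 - 2 * β - 4 * μ * (1 - β)| := by
  have h01 : (0:ℂ) ∈ ball (0:ℂ) 1 := by simp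
  have hfa : AnalyticOnNhd ℂ f (ball 0 1) := hf.analyticOnNhd isOpen_ball
  -- f does not vanish away from 0
  have hfne : ∀ z ∈ ball (0:ℂ) 1, z ≠ 0 → f z ≠ 0 := by
    intro z hz hz0 hc
    have h2 := hstar z hz hz0
    rw [hc, div_zero] at h2
    simp at h2
    linarith
  set g := dslope f 0 with hg
  have hga : AnalyticOnNhd ℂ g (ball 0 1) :=
    analyticOnNhd_dslope_zero (isOpen_ball.mem_nhds h01) hfa
  have hg0 : g 0 = 1 := by rw [hg, dslope_same]; exact hf1
  have hfg : ∀ z, f z = z * g z := by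
    intro z
    rcases eq_or_ne z 0 with rfl | h
    · simp [hf0]
    · rw [hg, dslope_of_ne f h, slope_def_field, hf0, sub_zero, sub_zero]
      field_simp
  have hgne : ∀ z ∈ ball (0:ℂ) 1, g z ≠ 0 := by
    intro z hz
    rcases eq_or_ne z 0 with rfl | h
    · rw [hg0]; exact one_ne_zero
    · have h2 := hfne z hz h
      rw [hfg z] at h2
      exact right_ne_zero_of_mul h2
  -- real part bound for p = f'/g
  have hrep : ∀ z ∈ ball (0:ℂ) 1, β < (deriv f z / g z).re := by
    intro z hz
    rcases eq_or_ne z 0 with rfl | h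
    · rw [hf1, hg0]
      simpa using hβ1
    · have h2 := hstar z hz h
      have h3 : z * deriv f z / f z = deriv f z / g z := by
        rw [hfg z, mul_div_mul_left _ _ h]
      rwa [h3] at h2
  set D : ℂ → ℂ := fun z => deriv f z + (1 - 2*(β:ℂ)) * g z with hD
  set N : ℂ → ℂ := fun z => deriv f z - g z with hN
  have hfa' : AnalyticOnNhd ℂ (deriv f) (ball 0 1) := hfa.deriv
  have hDa : AnalyticOnNhd ℂ D (ball 0 1) := by
    intro z hz
    exact (hfa' z hz).add (analyticAt_const.mul (hga z hz))
  have hNa : AnalyticOnNhd ℂ N (ball 0 1) := by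
    intro z hz
    exact (hfa' z hz).sub (hga z hz)
  have hDne : ∀ z ∈ ball (0:ℂ) 1, D z ≠ 0 := by
    intro z hz hc
    have h2 := hrep z hz
    rw [hD] at hc
    simp only at hc
    have h3 : deriv f z = -((1 - 2*(β:ℂ))) * g z := by linear_combination hc
    rw [h3, mul_div_assoc, div_self (hgne z hz), mul_one] at h2
    have h4 : ((-(1 - 2*(β:ℂ)))).re = 2*β - 1 := by simp
    rw [h4] at h2
    linarith
  set ω : ℂ → ℂ := fun z => N z / D z with hω
  have hωa : AnalyticOnNhd ℂ ω (ball 0 1) := by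
    intro z hz
    exact (hNa z hz).div (hDa z hz) (hDne z hz)
  have hω0 : ω 0 = 0 := by
    rw [hω]
    simp only [hN, hf1, hg0]
    simp
  have hωlt : ∀ z ∈ ball (0:ℂ) 1, ‖ω z‖ < 1 := by
    intro z hz
    rw [hω]
    simp only
    rw [norm_div, div_lt_one (norm_pos_iff.2 (hDne z hz))]
    set p : ℂ := deriv f z / g z with hp
    have hdf : deriv f z = p * g z := by
      rw [hp, div_mul_cancel₀ _ (hgne z hz)]
    have hNz : N z = (p - 1) * g z := by rw [hN]; simp only; rw [hdf]; ring
    have hDz : D z = (p + (1 - 2*(β:ℂ))) * g z := by rw [hD]; simp only; rw [hdf]; ring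
    rw [hNz, hDz, norm_mul, norm_mul]
    have := key2 β hβ1 p (hrep z hz)
    exact mul_lt_mul_of_pos_right this (norm_pos_iff.2 (hgne z hz))
  have hωd : DifferentiableOn ℂ ω (ball 0 1) := fun z hz =>
    ((hωa z hz).differentiableAt).differentiableWithinAt
  set φ := dslope ω 0 with hφ
  have hφa : AnalyticOnNhd ℂ φ (ball 0 1) :=
    analyticOnNhd_dslope_zero (isOpen_ball.mem_nhds h01) hωa
  have hφb : ∀ z ∈ ball (0:ℂ) 1, ‖φ z‖ ≤ 1 := by
    intro z hz
    have maps : MapsTo ω (ball (0:ℂ) 1) (ball (ω 0) 1) := by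
      intro y hy
      rw [hω0, mem_ball, dist_eq_norm, sub_zero]
      exact hωlt y hy
    simpa using Complex.norm_dslope_le_div_of_mapsTo_ball hωd (maps.mono_right ball_subset_closedBall) hz
  have hφd : DifferentiableOn ℂ φ (ball 0 1) := fun z hz =>
    ((hφa z hz).differentiableAt).differentiableWithinAt
  have hSP : ‖deriv φ 0‖ ≤ 1 - ‖φ 0‖ ^ 2 := schwarz_pick_zero hφd hφb
  -- coefficients of f in terms of g
  obtain ⟨hcf1, hcf2, hcf3⟩ := coeffs_of_id_mul hfg hga
  -- coefficients of ω in terms of φ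
  have hωφ : ∀ z, ω z = z * φ z := by
    intro z
    rcases eq_or_ne z 0 with rfl | h
    · rw [hω0]; ring
    · rw [hφ, dslope_of_ne ω h, slope_def_field, hω0, sub_zero, sub_zero]
      field_simp
  obtain ⟨hcω1, hcω2, -⟩ := coeffs_of_id_mul hωφ hφa
  -- derivatives of N and D
  have hNd : ∀ z ∈ ball (0:ℂ) 1, deriv N z = deriv (deriv f) z - deriv g z := by
    intro z hz
    rw [hN, deriv_fun_sub ((hfa' z hz).differentiableAt) ((hga z hz).differentiableAt)]
  have hDd : ∀ z ∈ ball (0:ℂ) 1, deriv D z = deriv (deriv f) z + (1 - 2*(β:ℂ)) * deriv g z := by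
    intro z hz
    rw [hD, deriv_fun_add ((hfa' z hz).differentiableAt)
      ((hga z hz).differentiableAt.const_mul _), deriv_const_mul _ ((hga z hz).differentiableAt)]
  -- the identity ω * D = N and its derivatives at 0
  have hid : ∀ z ∈ ball (0:ℂ) 1, ω z * D z = N z := by
    intro z hz
    rw [hω]
    exact div_mul_cancel₀ _ (hDne z hz)
  have hE1 : ∀ z ∈ ball (0:ℂ) 1, deriv ω z * D z + ω z * deriv D z = deriv N z := by
    intro z hz
    have h1 : (fun w => ω w * D w) =ᶠ[𝓝 z] N := eventually_of_mem (isOpen_ball.mem_nhds hz) hid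
    rw [← h1.deriv_eq, deriv_fun_mul ((hωa z hz).differentiableAt) ((hDa z hz).differentiableAt)]
  have hE2 : deriv (deriv ω) 0 * D 0 + 2 * (deriv ω 0 * deriv D 0) = deriv (deriv N) 0 := by
    have h1 : (fun z => deriv ω z * D z + ω z * deriv D z) =ᶠ[𝓝 0] deriv N :=
      eventually_of_mem (isOpen_ball.mem_nhds h01) hE1
    have h2 := h1.deriv_eq
    rw [deriv_fun_add
        (((hωa.deriv 0 h01).differentiableAt).fun_mul ((hDa 0 h01).differentiableAt))
        (((hωa 0 h01).differentiableAt).fun_mul ((hDa.deriv 0 h01).differentiableAt)),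
      deriv_fun_mul ((hωa.deriv 0 h01).differentiableAt) ((hDa 0 h01).differentiableAt),
      deriv_fun_mul ((hωa 0 h01).differentiableAt) ((hDa.deriv 0 h01).differentiableAt),
      hω0] at h2
    rw [← h2]
    ring
  -- numeric values at 0
  have hD0 : D 0 = 2 - 2*(β:ℂ) := by rw [hD]; simp only [hf1, hg0]; ring
  have hN1 : deriv N 0 = deriv g 0 := by
    rw [hNd 0 h01, hcf2]; ring
  have hdD0 : deriv D 0 = (3 - 2*(β:ℂ)) * deriv g 0 := by
    rw [hDd 0 h01, hcf2]; ring
  have hddN0 : deriv (deriv N) 0 = 2 * deriv (deriv g) 0 := by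
    have h1 : deriv N =ᶠ[𝓝 0] fun z => deriv (deriv f) z - deriv g z :=
      eventually_of_mem (isOpen_ball.mem_nhds h01) hNd
    rw [h1.deriv_eq, deriv_fun_sub ((hfa'.deriv 0 h01).differentiableAt)
      ((hga.deriv 0 h01).differentiableAt), hcf3]
    ring
  -- coefficient equations
  set c1 : ℂ := φ 0 with hc1
  set c2 : ℂ := deriv φ 0 with hc2
  set A2 : ℂ := deriv g 0 with hA2d
  set A3 : ℂ := deriv (deriv g) 0 with hA3d
  have e1 : c1 * (2 - 2*(β:ℂ)) = A2 := by
    have := hE1 0 h01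
    rw [hω0, hD0, hN1] at this
    rw [← this, hcω1]
    ring
  have e2 : 2 * c2 * (2 - 2*(β:ℂ)) + 2 * (c1 * ((3 - 2*(β:ℂ)) * A2)) = 2 * A3 := by
    have := hE2
    rw [hD0, hdD0, hddN0, hcω1, hcω2] at this
    linear_combination this
  -- extract a 2 and a 3
  have ha2 : a 2 = A2 := by
    rw [ha 2]
    have h2 : iteratedDeriv 2 f 0 = deriv (deriv f) 0 := by
      rw [iteratedDeriv_succ, iteratedDeriv_one]
    rw [h2, hcf2]
    norm_num
  have ha3 : a 3 = A3 / 2 := by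
    rw [ha 3]
    have h3 : iteratedDeriv 3 f 0 = deriv (deriv (deriv f)) 0 := by
      rw [iteratedDeriv_succ, iteratedDeriv_succ, iteratedDeriv_one]
    rw [h3, hcf3]
    have : ((Nat.factorial 3 : ℕ) : ℂ) = 6 := by norm_num [Nat.factorial]
    rw [this]
    field_simp
    ring
  -- the key algebraic identity
  have hkey : a 3 - (μ:ℂ) * a 2 ^ 2 =
      ((1:ℂ) - β) * (c2 + ((3 - 2*β - 4*μ*(1-β) : ℝ) : ℂ) * c1 ^ 2) := by
    rw [ha3, ha2]
    push_cast
    linear_combination (-1/4 : ℂ) * e2 +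
      ((μ:ℂ) * (A2 + ((2:ℂ) - 2*β) * c1) - c1 * ((3:ℂ) - 2*β) / 2) * e1
  -- final estimate
  rw [hkey]
  rw [norm_mul]
  have hn1 : ‖((1:ℂ) - β)‖ = 1 - β := by
    rw [show ((1:ℂ) - β) = ((1 - β : ℝ) : ℂ) by push_cast; ring]
    rw [Complex.norm_real, Real.norm_eq_abs, abs_of_pos (by linarith)]
  rw [hn1]
  apply mul_le_mul_of_nonneg_left _ (by linarith)
  set s : ℝ := 3 - 2*β - 4*μ*(1-β) with hs
  have hns : ‖((s:ℝ):ℂ)‖ = |s| := by rw [Complex.norm_real, Real.norm_eq_abs]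
  have htri : ‖c2 + ((s:ℝ):ℂ) * c1 ^ 2‖ ≤ ‖c2‖ + |s| * ‖c1‖ ^ 2 := by
    calc ‖c2 + ((s:ℝ):ℂ) * c1 ^ 2‖ ≤ ‖c2‖ + ‖((s:ℝ):ℂ) * c1 ^ 2‖ := norm_add_le _ _
      _ = ‖c2‖ + |s| * ‖c1‖ ^ 2 := by rw [norm_mul, norm_pow, hns]
  have hc1le : ‖c1‖ ≤ 1 := hφb 0 h01
  have ht0 : 0 ≤ ‖c1‖ ^ 2 := sq_nonneg _
  have ht1 : ‖c1‖ ^ 2 ≤ 1 := by nlinarith [norm_nonneg c1]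
  have hM1 : (1:ℝ) ≤ max 1 |s| := le_max_left _ _
  have hM2 : |s| ≤ max 1 |s| := le_max_right _ _
  calc ‖c2 + ((s:ℝ):ℂ) * c1 ^ 2‖ ≤ ‖c2‖ + |s| * ‖c1‖ ^ 2 := htri
    _ ≤ (1 - ‖c1‖ ^ 2) + |s| * ‖c1‖ ^ 2 := by linarith [hSP]
    _ ≤ max 1 |s| := by nlinarith
end
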